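/- Let G be a finite group, N a normal subgroup, M a normal subgroup, and let M_p be a Sylow p-subgroup of M. Then N ∩ M_p is a Sylow p-subgroup of N ∩ M. -/

import Mathlib

/-- `P` is a Sylow `p`-subgroup of the subgroup `M` (all inside an ambient group `G`):
it is a `p`-subgroup of `M` that is maximal among `p`-subgroups of `M`. -/
def IsSylowIn {G : Type*} [Group G] (p : ℕ) (P M : Subgroup G) : Prop :=
  P ≤ M ∧ IsPGroup p P ∧ ∀ Q : Subgroup G, Q ≤ M → IsPGroup p Q → P ≤ Q → Q = P

open Pointwise in
theorem stmt_7 {G : Type*} [Group G] [Finite G] (p : ℕ) (hp : p.Prime)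
    (N M Mp : Subgroup G) (hN : N.Normal) (hM : M.Normal)
    (hMp : IsSylowIn p Mp M) :
    IsSylowIn p (N ⊓ Mp) (N ⊓ M) := by
  classical
  haveI : Fact p.Prime := ⟨hp⟩
  obtain ⟨hle, hpMp, hmax⟩ := hMp
  have hinj : Function.Injective (Subgroup.map M.subtype) :=
    Subgroup.map_injective M.subtype_injective
  -- Mp.subgroupOf M is a Sylow p-subgroup of M
  have hpMp' : IsPGroup p (Mp.subgroupOf M) :=
    hpMp.of_equiv (Subgroup.subgroupOfEquivOfLe hle).symm
  let S : Sylow p M :=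
    ⟨Mp.subgroupOf M, hpMp', by
      intro Q hQ hleQ
      have h1 : Q.map M.subtype ≤ M := Subgroup.map_subtype_le Q
      have h2 : IsPGroup p (Q.map M.subtype) := hQ.map M.subtype
      have h3 : Mp ≤ Q.map M.subtype := by
        have := Subgroup.map_mono (f := M.subtype) hleQ
        rwa [Subgroup.subgroupOf_map_subtype, inf_eq_left.mpr hle] at this
      have h4 : Q.map M.subtype = Mp := hmax _ h1 h2 h3
      apply hinj
      rw [h4, Subgroup.subgroupOf_map_subtype, inf_eq_left.mpr hle]⟩
  refine ⟨inf_le_inf_left N hle, hpMp.to_le inf_le_right, ?_⟩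
  intro Q hQle hQp hPQ
  have hQM : Q ≤ M := hQle.trans inf_le_right
  -- Q.subgroupOf M is a p-subgroup of M, hence contained in some conjugate of S
  have hQp' : IsPGroup p (Q.subgroupOf M) :=
    hQp.of_equiv (Subgroup.subgroupOfEquivOfLe hQM).symm
  obtain ⟨T, hQT⟩ := hQp'.exists_le_sylow
  obtain ⟨g, hg⟩ := MulAction.exists_smul_eq (M : Subgroup G) S T
  have hQT' : Q.subgroupOf M ≤ (g • S : Sylow p M) := hg ▸ hQT
  have hcoe : ((g • S : Sylow p M) : Subgroup M) =
      (MulAut.conj (g : G) • Mp).subgroupOf M := by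
    show MulAut.conj g • (Mp.subgroupOf M) = _
    exact Subgroup.conj_smul_subgroupOf hle g
  -- push back up to G
  have hQC : Q ≤ MulAut.conj (g : G) • Mp := by
    have := Subgroup.map_mono (f := M.subtype) (hcoe ▸ hQT')
    rw [Subgroup.subgroupOf_map_subtype, Subgroup.subgroupOf_map_subtype,
      inf_eq_left.mpr hQM,
      inf_eq_left.mpr (Subgroup.conj_smul_le_of_le hle g)] at this
    exact this
  have hNconj : MulAut.conj (g : G) • N = N := Subgroup.Normal.conj_smul_eq_self _ N
  have hinfconj : N ⊓ MulAut.conj (g : G) • Mp = MulAut.conj (g : G) • (N ⊓ Mp) := by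
    rw [Subgroup.smul_inf, hNconj]
  have hQle' : Q ≤ MulAut.conj (g : G) • (N ⊓ Mp) := by
    rw [← hinfconj]
    exact le_inf (hQle.trans inf_le_left) hQC
  have hcard : Nat.card (MulAut.conj (g : G) • (N ⊓ Mp) : Subgroup G) =
      Nat.card (N ⊓ Mp : Subgroup G) :=
    (Nat.card_congr (Subgroup.equivSMul (MulAut.conj (g : G)) (N ⊓ Mp)).toEquiv).symm
  have heq : N ⊓ Mp = MulAut.conj (g : G) • (N ⊓ Mp) :=
    Subgroup.eq_of_le_of_card_ge (hPQ.trans hQle') hcard.le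
  exact le_antisymm (heq ▸ hQle') hPQ
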